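/- (Decomposition Lemma) Let m → G ← n be a monogamous acyclic cospan with finite carrier and let L be a convex subhypergraph of G. Then there exist a finite set k and a unique cospan i → L ← j such that m → G ← n is isomorphic to the composite ( m → C1 ← i+k ) ; ( (k → k ← k, identity legs) ⊕ (i → L ← j) ) ; ( j+k → C2 ← n ) for some subhypergraphs C1, C2 of G, where all cospans in this factorisation are monogamous and acyclic. -/

import Mathlib

namespace SDRT

/-- A directed hypergraph: a set of nodes and, for each hyperedge, an ordered
list of source nodes and an ordered list of target nodes.  A `(k,l)`-hyperedge
is a hyperedge with `k` sources and `l` targets. -/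
structure Hyp : Type 1 where
  V : Type
  E : Type
  src : E → List V
  tgt : E → List V

namespace Hyp

/-- The set of pairs `(h, i)` such that `v` is the `i`-th target of the hyperedge `h`.
The in-degree of `v` is the number of such pairs. -/
def inPairs (G : Hyp) (v : G.V) : Set (G.E × ℕ) := {p | (G.tgt p.1)[p.2]? = some v}

/-- The set of pairs `(h, j)` such that `v` is the `j`-th source of the hyperedge `h`.
The out-degree of `v` is the number of such pairs. -/
def outPairs (G : Hyp) (v : G.V) : Set (G.E × ℕ) := {p | (G.src p.1)[p.2]? = some v}

/-- `v` has in-degree `0`. -/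
def inDegZero (G : Hyp) (v : G.V) : Prop := G.inPairs v = ∅

/-- `v` has in-degree `1`. -/
def inDegOne (G : Hyp) (v : G.V) : Prop := ∃! p, p ∈ G.inPairs v

/-- `v` has out-degree `0`. -/
def outDegZero (G : Hyp) (v : G.V) : Prop := G.outPairs v = ∅

/-- `v` has out-degree `1`. -/
def outDegOne (G : Hyp) (v : G.V) : Prop := ∃! p, p ∈ G.outPairs v

/-- `h'` is a successor of `h` if some node is both a target of `h` and a source of `h'`. -/
def Successor (G : Hyp) (h h' : G.E) : Prop := ∃ v, v ∈ G.tgt h ∧ v ∈ G.src h'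

/-- `l` is a path (nonempty sequence of hyperedges, each a successor of the previous)
from the node `v` to the node `v'`: `v` is among the sources of the first hyperedge
and `v'` among the targets of the last one. -/
def PathFrom (G : Hyp) (l : List G.E) (v v' : G.V) : Prop :=
  ∃ hne : l ≠ [], l.Chain' G.Successor ∧ v ∈ G.src (l.head hne) ∧ v' ∈ G.tgt (l.getLast hne)

/-- `l` is a path from the hyperedge `h` to the hyperedge `h'`. -/
def EdgePath (G : Hyp) (l : List G.E) (h h' : G.E) : Prop :=
  ∃ hne : l ≠ [], l.Chain' G.Successor ∧ l.head hne = h ∧ l.getLast hne = h'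

/-- A hypergraph is acyclic if there is no path from a node to itself. -/
def Acyclic (G : Hyp) : Prop := ∀ (v : G.V) (l : List G.E), ¬ G.PathFrom l v v

end Hyp

/-- A subhypergraph: a set of nodes and hyperedges closed under taking the sources
and targets of its hyperedges. -/
structure SubHyp (G : Hyp) where
  nodes : Set G.V
  edges : Set G.E
  src_mem : ∀ e ∈ edges, ∀ v ∈ G.src e, v ∈ nodes
  tgt_mem : ∀ e ∈ edges, ∀ v ∈ G.tgt e, v ∈ nodes

/-- A subhypergraph `H` of `G` is convex if every path in `G` between nodes of `H`
consists only of hyperedges of `H`. -/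
def SubHyp.Convex {G : Hyp} (H : SubHyp G) : Prop :=
  ∀ v ∈ H.nodes, ∀ v' ∈ H.nodes, ∀ l, G.PathFrom l v v' → ∀ e ∈ l, e ∈ H.edges

/-- The hypergraph underlying a subhypergraph. -/
def SubHyp.toHyp {G : Hyp} (H : SubHyp G) : Hyp where
  V := H.nodes
  E := H.edges
  src := fun e => (G.src e.1).pmap (fun v hv => (⟨v, hv⟩ : H.nodes))
    (fun v hv => H.src_mem e.1 e.2 v hv)
  tgt := fun e => (G.tgt e.1).pmap (fun v hv => (⟨v, hv⟩ : H.nodes))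
    (fun v hv => H.tgt_mem e.1 e.2 v hv)

/-- A cospan of hypergraphs with discrete interfaces `m → G ← n`. -/
structure Cospan (m n : Type) : Type 1 where
  G : Hyp
  inp : m → G.V
  out : n → G.V

namespace Cospan

/-- A cospan is monogamous if both legs are injective, nodes in the image of the
input leg have in-degree 0, all other nodes have in-degree 1, nodes in the image
of the output leg have out-degree 0, and all other nodes have out-degree 1. -/
def Monogamous {m n : Type} (A : Cospan m n) : Prop :=
  Function.Injective A.inp ∧ Function.Injective A.out ∧
  (∀ v ∈ Set.range A.inp, A.G.inDegZero v) ∧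
  (∀ v ∉ Set.range A.inp, A.G.inDegOne v) ∧
  (∀ v ∈ Set.range A.out, A.G.outDegZero v) ∧
  (∀ v ∉ Set.range A.out, A.G.outDegOne v)

/-- A cospan is acyclic if its carrier is. -/
def Acyclic {m n : Type} (A : Cospan m n) : Prop := A.G.Acyclic

/-- Composition of cospans by pushout: glue `G` and `H` along the common
interface `n`, identifying `A.out k` with `B.inp k` for every `k : n`. -/
def comp {m n p : Type} (A : Cospan m n) (B : Cospan n p) : Cospan m p where
  G := { V := Quot (fun x y : A.G.V ⊕ B.G.V =>
                      ∃ k : n, x = Sum.inl (A.out k) ∧ y = Sum.inr (B.inp k))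
         E := A.G.E ⊕ B.G.E
         src := Sum.elim (fun e => (A.G.src e).map (fun v => Quot.mk _ (Sum.inl v)))
                         (fun e => (B.G.src e).map (fun v => Quot.mk _ (Sum.inr v)))
         tgt := Sum.elim (fun e => (A.G.tgt e).map (fun v => Quot.mk _ (Sum.inl v)))
                         (fun e => (B.G.tgt e).map (fun v => Quot.mk _ (Sum.inr v))) }
  inp := fun x => Quot.mk _ (Sum.inl (A.inp x))
  out := fun y => Quot.mk _ (Sum.inr (B.out y))

/-- Monoidal product (tensor) of cospans: disjoint union of the carriers, with
the evident interface maps. -/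
def tensor {m₁ n₁ m₂ n₂ : Type} (A : Cospan m₁ n₁) (B : Cospan m₂ n₂) :
    Cospan (m₁ ⊕ m₂) (n₁ ⊕ n₂) where
  G := { V := A.G.V ⊕ B.G.V
         E := A.G.E ⊕ B.G.E
         src := Sum.elim (fun e => (A.G.src e).map Sum.inl) (fun e => (B.G.src e).map Sum.inr)
         tgt := Sum.elim (fun e => (A.G.tgt e).map Sum.inl) (fun e => (B.G.tgt e).map Sum.inr) }
  inp := Sum.elim (fun x => Sum.inl (A.inp x)) (fun x => Sum.inr (B.inp x))
  out := Sum.elim (fun y => Sum.inl (A.out y)) (fun y => Sum.inr (B.out y))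

/-- The identity cospan on `k`: the discrete hypergraph on `k` with identity legs. -/
def idCospan (k : Type) : Cospan k k where
  G := { V := k, E := Empty, src := Empty.elim, tgt := Empty.elim }
  inp := id
  out := id

end Cospan

/-- An isomorphism of cospans: a hypergraph isomorphism of the carriers commuting
with the interface legs. -/
structure CospanIso {m n : Type} (A B : Cospan m n) where
  nodeEquiv : A.G.V ≃ B.G.V
  edgeEquiv : A.G.E ≃ B.G.E
  src_eq : ∀ e, B.G.src (edgeEquiv e) = (A.G.src e).map nodeEquiv
  tgt_eq : ∀ e, B.G.tgt (edgeEquiv e) = (A.G.tgt e).map nodeEquiv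
  inp_eq : ∀ x, nodeEquiv (A.inp x) = B.inp x
  out_eq : ∀ y, nodeEquiv (A.out y) = B.out y

/-- Two cospans are isomorphic if there is an isomorphism between them. -/
def Cospan.Isomorphic {m n : Type} (A B : Cospan m n) : Prop := Nonempty (CospanIso A B)

/-- A homomorphism of hypergraphs: maps nodes to nodes and hyperedges to
hyperedges, preserving the ordered lists of sources and targets. -/
structure HypHom (G H : Hyp) where
  nodeMap : G.V → H.V
  edgeMap : G.E → H.E
  src_eq : ∀ e, H.src (edgeMap e) = (G.src e).map nodeMap
  tgt_eq : ∀ e, H.tgt (edgeMap e) = (G.tgt e).map nodeMap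

/-- The image of a hypergraph homomorphism, as a subhypergraph of the codomain. -/
def HypHom.image {G H : Hyp} (f : HypHom G H) : SubHyp H where
  nodes := Set.range f.nodeMap
  edges := Set.range f.edgeMap
  src_mem := by
    rintro e ⟨e', rfl⟩ v hv
    rw [f.src_eq] at hv
    rcases List.mem_map.mp hv with ⟨w, -, rfl⟩
    exact ⟨w, rfl⟩
  tgt_mem := by
    rintro e ⟨e', rfl⟩ v hv
    rw [f.tgt_eq] at hv
    rcases List.mem_map.mp hv with ⟨w, -, rfl⟩
    exact ⟨w, rfl⟩


/-! ### Auxiliary development for the decomposition lemma -/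

section DecompAux

open Hyp

variable {m n : Type} (A : Cospan m n) (L : SubHyp A.G)

/-- `e` is reachable from the node `v` (as a source of the first edge of a path). -/
def NReach (G : Hyp) (v : G.V) (e : G.E) : Prop :=
  ∃ l, ∃ hne : l ≠ [], l.Chain' G.Successor ∧ v ∈ G.src (l.head hne) ∧ l.getLast hne = e

/-- Edges strictly after `L`. -/
def C2E : Set A.G.E := {e | e ∉ L.edges ∧ ∃ v ∈ L.nodes, NReach A.G v e}

/-- Edges of the first part. -/
def C1E : Set A.G.E := {e | e ∉ L.edges ∧ e ∉ C2E A L}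

/-- Nodes of the first part. -/
def C1N : Set A.G.V :=
  Set.range A.inp ∪ {v | ∃ p, p ∈ A.G.inPairs v ∧ p.1 ∈ C1E A L}

/-- Nodes of the second part. -/
def C2N : Set A.G.V :=
  Set.range A.out ∪ {v | ∃ p, p ∈ A.G.outPairs v ∧ p.1 ∈ C2E A L}

variable {A L}

lemma mem_tgt_of_inPair {v : A.G.V} {p} (hp : p ∈ A.G.inPairs v) : v ∈ A.G.tgt p.1 :=
  List.mem_of_getElem? hp

lemma mem_src_of_outPair {v : A.G.V} {p} (hp : p ∈ A.G.outPairs v) : v ∈ A.G.src p.1 :=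
  List.mem_of_getElem? hp

lemma inPair_of_mem {v : A.G.V} {e} (h : v ∈ A.G.tgt e) : ∃ p ∈ A.G.inPairs v, p.1 = e := by
  obtain ⟨i, hi⟩ := List.mem_iff_getElem?.1 h
  exact ⟨(e, i), hi, rfl⟩

lemma outPair_of_mem {v : A.G.V} {e} (h : v ∈ A.G.src e) : ∃ p ∈ A.G.outPairs v, p.1 = e := by
  obtain ⟨i, hi⟩ := List.mem_iff_getElem?.1 h
  exact ⟨(e, i), hi, rfl⟩

section Monog
variable (hm : A.Monogamous)
include hm

lemma no_in_input {v : A.G.V} (h : v ∈ Set.range A.inp) {p} (hp : p ∈ A.G.inPairs v) : False := by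
  have := hm.2.2.1 v h
  rw [Hyp.inDegZero, Set.eq_empty_iff_forall_notMem] at this
  exact this p hp

lemma no_out_output {v : A.G.V} (h : v ∈ Set.range A.out) {p} (hp : p ∈ A.G.outPairs v) : False := by
  have := hm.2.2.2.2.1 v h
  rw [Hyp.outDegZero, Set.eq_empty_iff_forall_notMem] at this
  exact this p hp

lemma in_unique {v : A.G.V} (h : v ∉ Set.range A.inp) : ∃! p, p ∈ A.G.inPairs v :=
  hm.2.2.2.1 v h

lemma out_unique {v : A.G.V} (h : v ∉ Set.range A.out) : ∃! p, p ∈ A.G.outPairs v :=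
  hm.2.2.2.2.2 v h

lemma inPair_eq {v : A.G.V} {p q} (hp : p ∈ A.G.inPairs v) (hq : q ∈ A.G.inPairs v) : p = q := by
  by_cases h : v ∈ Set.range A.inp
  · exact absurd (no_in_input hm h hp) (by simp)
  · obtain ⟨r, -, hr⟩ := in_unique hm h
    rw [hr p hp, hr q hq]

lemma outPair_eq {v : A.G.V} {p q} (hp : p ∈ A.G.outPairs v) (hq : q ∈ A.G.outPairs v) : p = q := by
  by_cases h : v ∈ Set.range A.out
  · exact absurd (no_out_output hm h hp) (by simp)
  · obtain ⟨r, -, hr⟩ := out_unique hm h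
    rw [hr p hp, hr q hq]

end Monog

lemma src_L_mem_C2E {v e} (hv : v ∈ L.nodes) (hs : v ∈ A.G.src e) (he : e ∉ L.edges) :
    e ∈ C2E A L := by
  refine ⟨he, v, hv, [e], by simp, List.isChain_singleton e, by simpa, by simp⟩

lemma C2E_extend {e e'} (he : e ∈ C2E A L) (hs : A.G.Successor e e') (he' : e' ∉ L.edges) :
    e' ∈ C2E A L := by
  obtain ⟨-, v, hv, l, hne, hch, hhd, hlast⟩ := he
  refine ⟨he', v, hv, l ++ [e'], by simp, ?_, ?_, ?_⟩
  · refine List.IsChain.append hch (List.isChain_singleton e') ?_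
    intro x hx y hy
    rw [List.getLast?_eq_getLast hne, Option.mem_some_iff] at hx
    simp only [List.head?_cons, Option.mem_some_iff] at hy
    subst hx; subst hy; exact hlast ▸ hs
  · rwa [List.head_append_of_ne_nil hne]
  · simp

lemma no_C2E_tgt_L (hconv : L.Convex) {v e} (he : e ∈ C2E A L) (ht : v ∈ A.G.tgt e)
    (hv : v ∈ L.nodes) : False := by
  obtain ⟨heL, u, hu, l, hne, hch, hhd, hlast⟩ := he
  have hpf : A.G.PathFrom l u v := ⟨hne, hch, hhd, hlast ▸ ht⟩
  exact heL (hconv u hu v hv l hpf e (hlast ▸ List.getLast_mem hne))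

lemma C1E_no_src_L {v e} (he : e ∈ C1E A L) (hs : v ∈ A.G.src e) (hv : v ∈ L.nodes) : False :=
  he.2 (src_L_mem_C2E hv hs he.1)

end DecompAux
section DecompAux2

open Hyp

variable {m n : Type} {A : Cospan m n} {L : SubHyp A.G}

section WithHyps
variable (hm : A.Monogamous) (hconv : L.Convex)
include hm

lemma C1E_src_mem {e} (he : e ∈ C1E A L) {v} (hv : v ∈ A.G.src e) : v ∈ C1N A L := by
  by_cases hr : v ∈ Set.range A.inp
  · exact Or.inl hr
  obtain ⟨p, hp, -⟩ := in_unique hm hr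
  refine Or.inr ⟨p, hp, ?_⟩
  have hpl : p.1 ∉ L.edges := by
    intro hpL
    exact C1E_no_src_L he hv (L.tgt_mem p.1 hpL v (mem_tgt_of_inPair hp))
  refine ⟨hpl, fun hp2 => ?_⟩
  exact he.2 (C2E_extend hp2 ⟨v, mem_tgt_of_inPair hp, hv⟩ he.1)

lemma C1E_tgt_mem {e} (he : e ∈ C1E A L) {v} (hv : v ∈ A.G.tgt e) : v ∈ C1N A L := by
  obtain ⟨p, hp, hpe⟩ := inPair_of_mem hv
  by_cases hr : v ∈ Set.range A.inp
  · exact absurd (no_in_input hm hr hp) (by simp)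
  · exact Or.inr ⟨p, hp, hpe ▸ he⟩

lemma C2E_src_mem {e} (he : e ∈ C2E A L) {v} (hv : v ∈ A.G.src e) : v ∈ C2N A L := by
  obtain ⟨p, hp, hpe⟩ := outPair_of_mem hv
  by_cases hr : v ∈ Set.range A.out
  · exact absurd (no_out_output hm hr hp) (by simp)
  · exact Or.inr ⟨p, hp, hpe ▸ he⟩

include hconv in
lemma C2E_tgt_mem {e} (he : e ∈ C2E A L) {v} (hv : v ∈ A.G.tgt e) : v ∈ C2N A L := by
  by_cases hr : v ∈ Set.range A.out
  · exact Or.inl hr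
  obtain ⟨p, hp, -⟩ := out_unique hm hr
  refine Or.inr ⟨p, hp, ?_⟩
  have hpl : p.1 ∉ L.edges := by
    intro hpL
    exact no_C2E_tgt_L hconv he hv (L.src_mem p.1 hpL v (mem_src_of_outPair hp))
  exact C2E_extend he ⟨v, hv, mem_src_of_outPair hp⟩ hpl

include hconv in
/-- Characterisation of `C1N` on nodes of `L`: in-degree zero inside `L`. -/
lemma C1N_L_iff {v} (hv : v ∈ L.nodes) :
    v ∈ C1N A L ↔ ∀ p ∈ A.G.inPairs v, p.1 ∉ L.edges := by
  constructor
  · rintro (hr | ⟨p, hp, hpC1⟩) q hq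
    · exact absurd (no_in_input hm hr hq) (by simp)
    · rw [inPair_eq hm hq hp]; exact hpC1.1
  · intro hIZ
    by_cases hr : v ∈ Set.range A.inp
    · exact Or.inl hr
    obtain ⟨p, hp, -⟩ := in_unique hm hr
    refine Or.inr ⟨p, hp, hIZ p hp, fun hp2 => ?_⟩
    exact no_C2E_tgt_L hconv hp2 (mem_tgt_of_inPair hp) hv

/-- Characterisation of `C2N` on nodes of `L`: out-degree zero inside `L`. -/
lemma C2N_L_iff {v} (hv : v ∈ L.nodes) :
    v ∈ C2N A L ↔ ∀ p ∈ A.G.outPairs v, p.1 ∉ L.edges := by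
  constructor
  · rintro (hr | ⟨p, hp, hpC2⟩) q hq
    · exact absurd (no_out_output hm hr hq) (by simp)
    · rw [outPair_eq hm hq hp]; exact hpC2.1
  · intro hOZ
    by_cases hr : v ∈ Set.range A.out
    · exact Or.inl hr
    obtain ⟨p, hp, -⟩ := out_unique hm hr
    exact Or.inr ⟨p, hp, src_L_mem_C2E hv (mem_src_of_outPair hp) (hOZ p hp)⟩

/-- Coverage: every node belongs to one of the three parts. -/
lemma cover {v} (h1 : v ∉ L.nodes) (h2 : v ∉ C1N A L) : v ∈ C2N A L := by
  have hr : v ∉ Set.range A.inp := fun h => h2 (Or.inl h)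
  obtain ⟨p, hp, -⟩ := in_unique hm hr
  have hpL : p.1 ∉ L.edges := fun h => h1 (L.tgt_mem p.1 h v (mem_tgt_of_inPair hp))
  have hpC2 : p.1 ∈ C2E A L := by
    by_contra hc
    exact h2 (Or.inr ⟨p, hp, hpL, hc⟩)
  by_cases ho : v ∈ Set.range A.out
  · exact Or.inl ho
  obtain ⟨q, hq, -⟩ := out_unique hm ho
  have hqL : q.1 ∉ L.edges := fun h => h1 (L.src_mem q.1 h v (mem_src_of_outPair hq))
  exact Or.inr ⟨q, hq, C2E_extend hpC2 ⟨v, mem_tgt_of_inPair hp, mem_src_of_outPair hq⟩ hqL⟩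

end WithHyps

end DecompAux2
section SubTransfer

open Hyp

variable {G : Hyp} (S : SubHyp G)

lemma SubHyp.toHyp_src_getElem? (e : S.toHyp.E) (i : ℕ) (w : S.toHyp.V) :
    (S.toHyp.src e)[i]? = some w ↔ (G.src e.1)[i]? = some w.1 := by
  show ((G.src e.1).pmap _ _)[i]? = _ ↔ _
  erw [List.getElem?_pmap, Option.pmap_eq_some_iff]
  constructor
  · rintro ⟨a, ha, h1, rfl⟩; exact h1
  · rintro h; exact ⟨w.1, w.2, h, rfl⟩

lemma SubHyp.toHyp_tgt_getElem? (e : S.toHyp.E) (i : ℕ) (w : S.toHyp.V) :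
    (S.toHyp.tgt e)[i]? = some w ↔ (G.tgt e.1)[i]? = some w.1 := by
  show ((G.tgt e.1).pmap _ _)[i]? = _ ↔ _
  erw [List.getElem?_pmap, Option.pmap_eq_some_iff]
  constructor
  · rintro ⟨a, ha, h1, rfl⟩; exact h1
  · rintro h; exact ⟨w.1, w.2, h, rfl⟩

lemma SubHyp.mem_toHyp_inPairs (w : S.toHyp.V) (p : S.toHyp.E × ℕ) :
    p ∈ S.toHyp.inPairs w ↔ (p.1.1, p.2) ∈ G.inPairs w.1 :=
  S.toHyp_tgt_getElem? p.1 p.2 w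

lemma SubHyp.mem_toHyp_outPairs (w : S.toHyp.V) (p : S.toHyp.E × ℕ) :
    p ∈ S.toHyp.outPairs w ↔ (p.1.1, p.2) ∈ G.outPairs w.1 :=
  S.toHyp_src_getElem? p.1 p.2 w

lemma SubHyp.mem_toHyp_src {e : S.toHyp.E} {w : S.toHyp.V} (h : w ∈ S.toHyp.src e) :
    w.1 ∈ G.src e.1 := by
  obtain ⟨a, ha, rfl⟩ := List.mem_pmap.1 h
  exact ha

lemma SubHyp.mem_toHyp_tgt {e : S.toHyp.E} {w : S.toHyp.V} (h : w ∈ S.toHyp.tgt e) :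
    w.1 ∈ G.tgt e.1 := by
  obtain ⟨a, ha, rfl⟩ := List.mem_pmap.1 h
  exact ha

lemma SubHyp.toHyp_successor {e e' : S.toHyp.E} (h : S.toHyp.Successor e e') :
    G.Successor e.1 e'.1 := by
  obtain ⟨w, hw1, hw2⟩ := h
  exact ⟨w.1, S.mem_toHyp_tgt hw1, S.mem_toHyp_src hw2⟩

lemma SubHyp.toHyp_acyclic (h : G.Acyclic) : S.toHyp.Acyclic := by
  intro v l hp
  obtain ⟨hne, hch, hh, hl⟩ := hp
  have hne' : l.map Subtype.val ≠ [] := by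
    intro hc; exact hne (List.map_eq_nil_iff.1 hc)
  refine h v.1 (l.map Subtype.val) ⟨hne', ?_, ?_, ?_⟩
  · exact (List.isChain_map _).2 (hch.imp fun {a b} hs => S.toHyp_successor hs)
  · erw [List.head_map]
    exact S.mem_toHyp_src hh
  · erw [List.getLast_map]
    exact S.mem_toHyp_tgt hl

end SubTransfer
section DecompParts

open Hyp

variable {m n : Type} {A : Cospan m n} {L : SubHyp A.G}
variable (hm : A.Monogamous) (hconv : L.Convex)

/-- The first subhypergraph. -/
def C1S : SubHyp A.G where
  nodes := C1N A L
  edges := C1E A L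
  src_mem := fun e he v hv => C1E_src_mem hm he hv
  tgt_mem := fun e he v hv => C1E_tgt_mem hm he hv

/-- The second subhypergraph. -/
def C2S : SubHyp A.G where
  nodes := C2N A L
  edges := C2E A L
  src_mem := fun e he v hv => C2E_src_mem hm he hv
  tgt_mem := fun e he v hv => C2E_tgt_mem hm hconv he hv

variable (A L) in
/-- The set of nodes passing beside `L`. -/
def Kset : Set A.G.V := (C1N A L ∩ C2N A L) \ L.nodes

variable (A L) in
/-- The input interface of `L`. -/
def Iset : Set L.toHyp.V := {v | v.1 ∈ C1N A L}

variable (A L) in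
/-- The output interface of `L`. -/
def Jset : Set L.toHyp.V := {v | v.1 ∈ C2N A L}

/-- The middle cospan. -/
def MIDc : Cospan ↥(Iset A L) ↥(Jset A L) :=
  Cospan.mk L.toHyp (fun x => x.1) (fun y => y.1)

def f₁ : m → (C1S hm (L := L)).toHyp.V := fun x => ⟨A.inp x, Or.inl ⟨x, rfl⟩⟩

def g₁ : ↥(Kset A L) ⊕ ↥(Iset A L) → (C1S hm (L := L)).toHyp.V :=
  Sum.elim (fun κ => ⟨κ.1, κ.2.1.1⟩) (fun i => ⟨i.1.1, i.2⟩)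

def f₂ : ↥(Kset A L) ⊕ ↥(Jset A L) → (C2S hm hconv).toHyp.V :=
  Sum.elim (fun κ => ⟨κ.1, κ.2.1.2⟩) (fun j => ⟨j.1.1, j.2⟩)

def g₂ : n → (C2S hm hconv).toHyp.V := fun y => ⟨A.out y, Or.inl ⟨y, rfl⟩⟩

def C1c : Cospan m (↥(Kset A L) ⊕ ↥(Iset A L)) := Cospan.mk (C1S hm (L := L)).toHyp (f₁ hm) (g₁ hm)

def C2c : Cospan (↥(Kset A L) ⊕ ↥(Jset A L)) n := Cospan.mk (C2S hm hconv).toHyp (f₂ hm hconv) (g₂ hm hconv)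

end DecompParts
section SubDeg

open Hyp

variable {G : Hyp} (S : SubHyp G)

lemma SubHyp.sub_inDegZero {w : S.toHyp.V} (h : ∀ p ∈ G.inPairs w.1, p.1 ∉ S.edges) :
    S.toHyp.inDegZero w := by
  rw [Hyp.inDegZero, Set.eq_empty_iff_forall_notMem]
  intro p hp
  exact h _ ((S.mem_toHyp_inPairs w p).1 hp) p.1.2

lemma SubHyp.sub_outDegZero {w : S.toHyp.V} (h : ∀ p ∈ G.outPairs w.1, p.1 ∉ S.edges) :
    S.toHyp.outDegZero w := by
  rw [Hyp.outDegZero, Set.eq_empty_iff_forall_notMem]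
  intro p hp
  exact h _ ((S.mem_toHyp_outPairs w p).1 hp) p.1.2

lemma SubHyp.sub_inDegOne {w : S.toHyp.V} {p : G.E × ℕ} (hp : p ∈ G.inPairs w.1)
    (hu : ∀ q ∈ G.inPairs w.1, q = p) (hS : p.1 ∈ S.edges) : S.toHyp.inDegOne w := by
  refine ⟨(⟨p.1, hS⟩, p.2), (S.mem_toHyp_inPairs w _).2 hp, ?_⟩
  rintro ⟨⟨e, he⟩, i⟩ hq
  have h2 := hu _ ((S.mem_toHyp_inPairs w _).1 hq)
  obtain ⟨h3, h4⟩ := Prod.ext_iff.1 h2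
  simp only [] at h3 h4; subst h4
  exact Prod.ext (Subtype.ext h3) rfl

lemma SubHyp.sub_outDegOne {w : S.toHyp.V} {p : G.E × ℕ} (hp : p ∈ G.outPairs w.1)
    (hu : ∀ q ∈ G.outPairs w.1, q = p) (hS : p.1 ∈ S.edges) : S.toHyp.outDegOne w := by
  refine ⟨(⟨p.1, hS⟩, p.2), (S.mem_toHyp_outPairs w _).2 hp, ?_⟩
  rintro ⟨⟨e, he⟩, i⟩ hq
  have h2 := hu _ ((S.mem_toHyp_outPairs w _).1 hq)
  obtain ⟨h3, h4⟩ := Prod.ext_iff.1 h2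
  simp only [] at h3 h4; subst h4
  exact Prod.ext (Subtype.ext h3) rfl

end SubDeg
section DecompMono

open Hyp

variable {m n : Type} {A : Cospan m n} {L : SubHyp A.G}
variable (hm : A.Monogamous) (hconv : L.Convex)

lemma mem_range_f₁ {v : (C1S hm (L := L)).toHyp.V} :
    v ∈ Set.range (f₁ hm) ↔ v.1 ∈ Set.range A.inp := by
  constructor
  · rintro ⟨x, rfl⟩; exact ⟨x, rfl⟩
  · rintro ⟨x, hx⟩; exact ⟨x, Subtype.ext hx⟩

lemma mem_range_g₁ {v : (C1S hm (L := L)).toHyp.V} :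
    v ∈ Set.range (g₁ hm) ↔ (v.1 ∈ L.nodes ∨ v.1 ∈ C2N A L) := by
  constructor
  · rintro ⟨(κ | i), rfl⟩
    · exact Or.inr κ.2.1.2
    · exact Or.inl i.1.2
  · intro h
    by_cases hL : v.1 ∈ L.nodes
    · exact ⟨Sum.inr ⟨⟨v.1, hL⟩, v.2⟩, Subtype.ext rfl⟩
    · rcases h with h | h
      · exact absurd h hL
      · exact ⟨Sum.inl ⟨v.1, ⟨v.2, h⟩, hL⟩, Subtype.ext rfl⟩

lemma mem_range_g₂ {v : (C2S hm hconv).toHyp.V} :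
    v ∈ Set.range (g₂ hm hconv) ↔ v.1 ∈ Set.range A.out := by
  constructor
  · rintro ⟨x, rfl⟩; exact ⟨x, rfl⟩
  · rintro ⟨x, hx⟩; exact ⟨x, Subtype.ext hx⟩

lemma mem_range_f₂ {v : (C2S hm hconv).toHyp.V} :
    v ∈ Set.range (f₂ hm hconv) ↔ (v.1 ∈ L.nodes ∨ v.1 ∈ C1N A L) := by
  constructor
  · rintro ⟨(κ | j), rfl⟩
    · exact Or.inr κ.2.1.1
    · exact Or.inl j.1.2
  · intro h
    by_cases hL : v.1 ∈ L.nodes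
    · exact ⟨Sum.inr ⟨⟨v.1, hL⟩, v.2⟩, Subtype.ext rfl⟩
    · rcases h with h | h
      · exact absurd h hL
      · exact ⟨Sum.inl ⟨v.1, ⟨h, v.2⟩, hL⟩, Subtype.ext rfl⟩

include hm in
lemma no_out_pair_in_C1E {v : A.G.V} (h : v ∈ L.nodes ∨ v ∈ C2N A L) :
    ∀ p ∈ A.G.outPairs v, p.1 ∉ C1E A L := by
  intro p hp hC1
  rcases h with hL | hC2
  · exact C1E_no_src_L hC1 (mem_src_of_outPair hp) hL
  · rcases hC2 with ho | ⟨q, hq, hqC2⟩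
    · exact no_out_output hm ho hp
    · rw [outPair_eq hm hq hp] at hqC2
      exact hC1.2 hqC2

include hm hconv in
lemma no_in_pair_in_C2E {v : A.G.V} (h : v ∈ L.nodes ∨ v ∈ C1N A L) :
    ∀ p ∈ A.G.inPairs v, p.1 ∉ C2E A L := by
  intro p hp hC2
  rcases h with hL | hC1
  · exact no_C2E_tgt_L hconv hC2 (mem_tgt_of_inPair hp) hL
  · rcases hC1 with ho | ⟨q, hq, hqC1⟩
    · exact no_in_input hm ho hp
    · rw [inPair_eq hm hq hp] at hqC1
      exact hqC1.2 hC2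

lemma C1c_mono : (C1c hm (L := L)).Monogamous := by
  unfold C1c Cospan.Monogamous
  dsimp only
  refine ⟨?_, ?_, ?_, ?_, ?_, ?_⟩
  · intro a b h
    exact hm.1 (congrArg Subtype.val h)
  · rintro (κ | i) (κ' | i') h
    · have h' := congrArg Subtype.val h
      exact congrArg Sum.inl (Subtype.ext (h' : _ = _))
    · exact absurd (congrArg Subtype.val h ▸ i'.1.2) κ.2.2
    · exact absurd ((congrArg Subtype.val h).symm ▸ i.1.2) κ'.2.2
    · have h' := congrArg Subtype.val h
      exact congrArg Sum.inr (Subtype.ext (Subtype.ext (h' : _ = _)))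
  · intro v hv
    exact SubHyp.sub_inDegZero _ fun p hp _ => no_in_input hm ((mem_range_f₁ hm).1 hv) hp
  · intro v hv
    rw [mem_range_f₁] at hv
    rcases v.2 with ho | ⟨p, hp, hC1⟩
    · exact absurd ho hv
    · exact SubHyp.sub_inDegOne _ hp (fun q hq => inPair_eq hm hq hp) hC1
  · intro v hv
    exact SubHyp.sub_outDegZero _ (no_out_pair_in_C1E hm ((mem_range_g₁ hm).1 hv))
  · intro v hv
    rw [mem_range_g₁] at hv
    push_neg at hv
    obtain ⟨hL, hC2⟩ := hv
    have ho : v.1 ∉ Set.range A.out := fun h => hC2 (Or.inl h)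
    obtain ⟨p, hp, -⟩ := out_unique hm ho
    have hpL : p.1 ∉ L.edges := fun h => hL (L.src_mem p.1 h v.1 (mem_src_of_outPair hp))
    have hpC2 : p.1 ∉ C2E A L := fun h => hC2 (Or.inr ⟨p, hp, h⟩)
    exact SubHyp.sub_outDegOne _ hp (fun q hq => outPair_eq hm hq hp) ⟨hpL, hpC2⟩

lemma C2c_mono : (C2c hm hconv).Monogamous := by
  unfold C2c Cospan.Monogamous
  dsimp only
  refine ⟨?_, ?_, ?_, ?_, ?_, ?_⟩
  · rintro (κ | j) (κ' | j') h
    · have h' := congrArg Subtype.val h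
      exact congrArg Sum.inl (Subtype.ext (h' : _ = _))
    · exact absurd (congrArg Subtype.val h ▸ j'.1.2) κ.2.2
    · exact absurd ((congrArg Subtype.val h).symm ▸ j.1.2) κ'.2.2
    · have h' := congrArg Subtype.val h
      exact congrArg Sum.inr (Subtype.ext (Subtype.ext (h' : _ = _)))
  · intro a b h
    exact hm.2.1 (congrArg Subtype.val h)
  · intro v hv
    exact SubHyp.sub_inDegZero _ (no_in_pair_in_C2E hm hconv ((mem_range_f₂ hm hconv).1 hv))
  · intro v hv
    rw [mem_range_f₂] at hv
    push_neg at hv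
    obtain ⟨hL, hC1⟩ := hv
    have hi : v.1 ∉ Set.range A.inp := fun h => hC1 (Or.inl h)
    obtain ⟨p, hp, -⟩ := in_unique hm hi
    have hpL : p.1 ∉ L.edges := fun h => hL (L.tgt_mem p.1 h v.1 (mem_tgt_of_inPair hp))
    have hpC1 : p.1 ∉ C1E A L := fun h => hC1 (Or.inr ⟨p, hp, h⟩)
    have hpC2 : p.1 ∈ C2E A L := by
      by_contra hc
      exact hpC1 ⟨hpL, hc⟩
    exact SubHyp.sub_inDegOne _ hp (fun q hq => inPair_eq hm hq hp) hpC2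
  · intro v hv
    exact SubHyp.sub_outDegZero _ fun p hp _ =>
      no_out_output hm ((mem_range_g₂ hm hconv).1 hv) hp
  · intro v hv
    rw [mem_range_g₂] at hv
    rcases v.2 with ho | ⟨p, hp, hC2⟩
    · exact absurd ho hv
    · exact SubHyp.sub_outDegOne _ hp (fun q hq => outPair_eq hm hq hp) hC2

include hm hconv in
lemma MIDc_mono : (MIDc (A := A) (L := L)).Monogamous := by
  unfold MIDc Cospan.Monogamous
  dsimp only
  refine ⟨?_, ?_, ?_, ?_, ?_, ?_⟩
  · intro a b h; exact Subtype.ext h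
  · intro a b h; exact Subtype.ext h
  · rintro v ⟨i, rfl⟩
    exact SubHyp.sub_inDegZero _ ((C1N_L_iff hm hconv i.1.2).1 i.2)
  · intro v hv
    have hvC1 : v.1 ∉ C1N A L := by
      intro hc
      exact hv ⟨⟨v, hc⟩, rfl⟩
    have hi : v.1 ∉ Set.range A.inp := fun h => hvC1 (Or.inl h)
    obtain ⟨p, hp, -⟩ := in_unique hm hi
    have hpC1 : p.1 ∉ C1E A L := fun h => hvC1 (Or.inr ⟨p, hp, h⟩)
    have hpC2 : p.1 ∉ C2E A L := fun h => no_C2E_tgt_L hconv h (mem_tgt_of_inPair hp) v.2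
    have hpL : p.1 ∈ L.edges := by
      by_contra hc
      exact hpC1 ⟨hc, hpC2⟩
    exact SubHyp.sub_inDegOne _ hp (fun q hq => inPair_eq hm hq hp) hpL
  · rintro v ⟨j, rfl⟩
    exact SubHyp.sub_outDegZero _ ((C2N_L_iff hm j.1.2).1 j.2)
  · intro v hv
    have hvC2 : v.1 ∉ C2N A L := by
      intro hc
      exact hv ⟨⟨v, hc⟩, rfl⟩
    have ho : v.1 ∉ Set.range A.out := fun h => hvC2 (Or.inl h)
    obtain ⟨p, hp, -⟩ := out_unique hm ho
    have hpC2 : p.1 ∉ C2E A L := fun h => hvC2 (Or.inr ⟨p, hp, h⟩)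
    have hpL : p.1 ∈ L.edges := by
      by_contra hc
      exact hpC2 (src_L_mem_C2E v.2 (mem_src_of_outPair hp) hc)
    exact SubHyp.sub_outDegOne _ hp (fun q hq => outPair_eq hm hq hp) hpL

end DecompMono
section DecompIso

open Hyp

variable {m n : Type} {A : Cospan m n} {L : SubHyp A.G}
variable (hm : A.Monogamous) (hconv : L.Convex)

/-- The composite cospan of the decomposition. -/
def Dc : Cospan m n :=
  ((C1c hm (L := L)).comp ((Cospan.idCospan ↥(Kset A L)).tensor MIDc)).comp (C2c hm hconv)

def tmap : (Dc hm hconv).G.V → A.G.V :=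
  Quot.lift
    (Sum.elim
      (Quot.lift (Sum.elim Subtype.val (Sum.elim Subtype.val Subtype.val))
        (by rintro a b ⟨k, rfl, rfl⟩; cases k <;> rfl))
      Subtype.val)
    (by rintro a b ⟨k, rfl, rfl⟩; cases k <;> rfl)

open Classical in
noncomputable def smap : A.G.V → (Dc hm hconv).G.V := fun v =>
  if h : v ∈ L.nodes then
    Quot.mk _ (Sum.inl (Quot.mk _ (Sum.inr (Sum.inr ⟨v, h⟩))))
  else if h1 : v ∈ C1N A L then
    Quot.mk _ (Sum.inl (Quot.mk _ (Sum.inl ⟨v, h1⟩)))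
  else Quot.mk _ (Sum.inr ⟨v, cover hm h h1⟩)

lemma smap_eq_L {v} (h : v ∈ L.nodes) :
    smap hm hconv v = Quot.mk _ (Sum.inl (Quot.mk _ (Sum.inr (Sum.inr ⟨v, h⟩)))) := by
  unfold smap
  erw [dif_pos h]; rfl

lemma smap_eq_C1 {v} (h1 : v ∈ C1N A L) :
    smap hm hconv v = Quot.mk _ (Sum.inl (Quot.mk _ (Sum.inl ⟨v, h1⟩))) := by
  by_cases h : v ∈ L.nodes
  · rw [smap_eq_L hm hconv h]
    exact (congrArg (fun q => Quot.mk _ (Sum.inl q))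
      (Quot.sound ⟨Sum.inr ⟨⟨v, h⟩, h1⟩, rfl, rfl⟩)).symm
  · unfold smap
    erw [dif_neg h, dif_pos h1]; rfl

lemma smap_eq_C2 {v} (h2 : v ∈ C2N A L) :
    smap hm hconv v = Quot.mk _ (Sum.inr ⟨v, h2⟩) := by
  by_cases h : v ∈ L.nodes
  · rw [smap_eq_L hm hconv h]
    exact Quot.sound ⟨Sum.inr ⟨⟨v, h⟩, h2⟩, rfl, rfl⟩
  · by_cases h1 : v ∈ C1N A L
    · rw [smap_eq_C1 hm hconv h1]
      refine Eq.trans (congrArg (fun q => Quot.mk _ (Sum.inl q))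
        (Quot.sound ⟨Sum.inl ⟨v, ⟨h1, h2⟩, h⟩, rfl, rfl⟩)) ?_
      exact Quot.sound ⟨Sum.inl ⟨v, ⟨h1, h2⟩, h⟩, rfl, rfl⟩
    · unfold smap
      erw [dif_neg h, dif_neg h1]

lemma tmap_smap (v : A.G.V) : tmap hm hconv (smap hm hconv v) = v := by
  by_cases h : v ∈ L.nodes
  · rw [smap_eq_L hm hconv h]; rfl
  · by_cases h1 : v ∈ C1N A L
    · rw [smap_eq_C1 hm hconv h1]; rfl
    · unfold smap
      erw [dif_neg h, dif_neg h1]; rfl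

lemma smap_tmap (x : (Dc hm hconv).G.V) : smap hm hconv (tmap hm hconv x) = x := by
  induction x using Quot.ind with
  | _ y =>
    rcases y with q | c₂
    · induction q using Quot.ind with
      | _ z =>
        rcases z with c | (κ | lv)
        · exact smap_eq_C1 hm hconv c.2
        · refine (smap_eq_C1 hm hconv κ.2.1.1).trans ?_
          exact congrArg (fun q => Quot.mk _ (Sum.inl q)) (Quot.sound ⟨Sum.inl κ, rfl, rfl⟩)
        · exact smap_eq_L hm hconv lv.2
    · exact smap_eq_C2 hm hconv c₂.2

/-- The node equivalence. -/
noncomputable def nodeEq : A.G.V ≃ (Dc hm hconv).G.V where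
  toFun := smap hm hconv
  invFun := tmap hm hconv
  left_inv := tmap_smap hm hconv
  right_inv := smap_tmap hm hconv

end DecompIso
section DecompIso2

open Hyp

variable {m n : Type} {A : Cospan m n} {L : SubHyp A.G}
variable (hm : A.Monogamous) (hconv : L.Convex)

lemma pmap_map_eq_map {α β γ : Type _} {P : α → Prop} (f : ∀ a, P a → β) (g : β → γ) (k : α → γ)
    (hc : ∀ a (h : P a), g (f a h) = k a) :
    ∀ (l : List α) (H : ∀ a ∈ l, P a), (l.pmap f H).map g = l.map k := by
  intro l H
  induction l with
  | nil => rfl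
  | cons a t ih => simp only [List.pmap, List.map_cons, hc, ih]

open Classical in
noncomputable def einv : A.G.E → (Dc hm hconv).G.E := fun e =>
  if h : e ∈ L.edges then Sum.inl (Sum.inr (Sum.inr ⟨e, h⟩))
  else if h2 : e ∈ C2E A L then Sum.inr ⟨e, h2⟩
  else Sum.inl (Sum.inl ⟨e, h, h2⟩)

def emap : (Dc hm hconv).G.E → A.G.E :=
  Sum.elim (Sum.elim Subtype.val (Sum.elim Empty.elim Subtype.val)) Subtype.val

noncomputable def edgeEq : A.G.E ≃ (Dc hm hconv).G.E where
  toFun := einv hm hconv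
  invFun := emap hm hconv
  left_inv := by
    intro e
    unfold einv emap
    by_cases h : e ∈ L.edges
    · erw [dif_pos h]; rfl
    · by_cases h2 : e ∈ C2E A L
      · erw [dif_neg h, dif_pos h2]; rfl
      · erw [dif_neg h, dif_neg h2]; rfl
  right_inv := by
    rintro ((⟨e, he⟩ | (x | ⟨e, he⟩)) | ⟨e, he⟩)
    · show einv hm hconv e = _
      unfold einv
      erw [dif_neg he.1, dif_neg he.2]
    · exact x.elim
    · show einv hm hconv e = _
      unfold einv
      erw [dif_pos (show e ∈ L.edges from he)]
    · show einv hm hconv e = _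
      unfold einv
      erw [dif_neg he.1, dif_pos (show e ∈ C2E A L from he)]

lemma src_eq_aux (e : A.G.E) :
    (Dc hm hconv).G.src (einv hm hconv e) = (A.G.src e).map (smap hm hconv) := by
  unfold einv
  by_cases h : e ∈ L.edges
  · erw [dif_pos h]
    simp only [Dc, C1c, C2c, MIDc, Cospan.comp, Cospan.tensor, Cospan.idCospan, SubHyp.toHyp,
      Sum.elim_inl, Sum.elim_inr, List.map_map]
    refine pmap_map_eq_map _ _ _ ?_ _ _
    exact fun a ha => (smap_eq_L hm hconv ha).symm
  · by_cases h2 : e ∈ C2E A L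
    · erw [dif_neg h, dif_pos h2]
      simp only [Dc, C1c, C2c, MIDc, C2S, Cospan.comp, Cospan.tensor, Cospan.idCospan,
        SubHyp.toHyp, Sum.elim_inl, Sum.elim_inr, List.map_map]
      refine pmap_map_eq_map _ _ _ ?_ _ _
      exact fun a ha => (smap_eq_C2 hm hconv ha).symm
    · erw [dif_neg h, dif_neg h2]
      simp only [Dc, C1c, C2c, MIDc, C1S, Cospan.comp, Cospan.tensor, Cospan.idCospan,
        SubHyp.toHyp, Sum.elim_inl, Sum.elim_inr, List.map_map]
      refine pmap_map_eq_map _ _ _ ?_ _ _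
      exact fun a ha => (smap_eq_C1 hm hconv ha).symm

lemma tgt_eq_aux (e : A.G.E) :
    (Dc hm hconv).G.tgt (einv hm hconv e) = (A.G.tgt e).map (smap hm hconv) := by
  unfold einv
  by_cases h : e ∈ L.edges
  · erw [dif_pos h]
    simp only [Dc, C1c, C2c, MIDc, Cospan.comp, Cospan.tensor, Cospan.idCospan, SubHyp.toHyp,
      Sum.elim_inl, Sum.elim_inr, List.map_map]
    refine pmap_map_eq_map _ _ _ ?_ _ _
    exact fun a ha => (smap_eq_L hm hconv ha).symm
  · by_cases h2 : e ∈ C2E A L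
    · erw [dif_neg h, dif_pos h2]
      simp only [Dc, C1c, C2c, MIDc, C2S, Cospan.comp, Cospan.tensor, Cospan.idCospan,
        SubHyp.toHyp, Sum.elim_inl, Sum.elim_inr, List.map_map]
      refine pmap_map_eq_map _ _ _ ?_ _ _
      exact fun a ha => (smap_eq_C2 hm hconv ha).symm
    · erw [dif_neg h, dif_neg h2]
      simp only [Dc, C1c, C2c, MIDc, C1S, Cospan.comp, Cospan.tensor, Cospan.idCospan,
        SubHyp.toHyp, Sum.elim_inl, Sum.elim_inr, List.map_map]
      refine pmap_map_eq_map _ _ _ ?_ _ _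
      exact fun a ha => (smap_eq_C1 hm hconv ha).symm

/-- The main isomorphism. -/
noncomputable def decompIso : CospanIso A (Dc hm hconv) where
  nodeEquiv := nodeEq hm hconv
  edgeEquiv := edgeEq hm hconv
  src_eq := src_eq_aux hm hconv
  tgt_eq := tgt_eq_aux hm hconv
  inp_eq := fun x => smap_eq_C1 hm hconv (Or.inl ⟨x, rfl⟩)
  out_eq := fun y => smap_eq_C2 hm hconv (Or.inl ⟨y, rfl⟩)

end DecompIso2
/-- **Decomposition Lemma.** Let `m → G ← n` be a monogamous acyclic
cospan with finite carrier and let `L` be a convex subhypergraph of `G`.  Then there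
exist a finite set `k` and a unique cospan `i → L ← j` (with `i`, `j` sets of nodes of
`L` and inclusions as legs) such that `m → G ← n` is isomorphic to the composite
`(m → C₁ ← k+i) ; ((k → k ← k) ⊕ (i → L ← j)) ; (k+j → C₂ ← n)` for some
subhypergraphs `C₁`, `C₂` of `G`, where all the cospans in the factorisation are
monogamous and acyclic. -/
theorem decomposition {m n : Type} [Finite m] [Finite n] (A : Cospan m n)
    (hV : Finite A.G.V) (hE : Finite A.G.E)
    (hm : A.Monogamous) (ha : A.Acyclic)
    (L : SubHyp A.G) (hconv : L.Convex) :
    ∃ (k : Type) (_ : Finite k),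
      ∃! ij : Set L.toHyp.V × Set L.toHyp.V,
        (Cospan.mk L.toHyp (fun x : ij.1 => x.1) (fun y : ij.2 => y.1)).Monogamous ∧
        (Cospan.mk L.toHyp (fun x : ij.1 => x.1) (fun y : ij.2 => y.1)).Acyclic ∧
        ∃ (C₁s C₂s : SubHyp A.G)
          (f₁ : m → C₁s.toHyp.V) (g₁ : k ⊕ ij.1 → C₁s.toHyp.V)
          (f₂ : k ⊕ ij.2 → C₂s.toHyp.V) (g₂ : n → C₂s.toHyp.V),
          (Cospan.mk C₁s.toHyp f₁ g₁).Monogamous ∧ (Cospan.mk C₁s.toHyp f₁ g₁).Acyclic ∧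
          (Cospan.mk C₂s.toHyp f₂ g₂).Monogamous ∧ (Cospan.mk C₂s.toHyp f₂ g₂).Acyclic ∧
          A.Isomorphic
            (((Cospan.mk C₁s.toHyp f₁ g₁).comp
                ((Cospan.idCospan k).tensor
                  (Cospan.mk L.toHyp (fun x : ij.1 => x.1) (fun y : ij.2 => y.1)))).comp
              (Cospan.mk C₂s.toHyp f₂ g₂)) := by
  classical
  haveI := hV
  refine ⟨↥(Kset A L), inferInstance, ?_⟩
  have key : ∀ (ij : Set L.toHyp.V × Set L.toHyp.V),
      (Cospan.mk L.toHyp (fun x : ij.1 => x.1) (fun y : ij.2 => y.1)).Monogamous →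
      ij.1 = {v | L.toHyp.inDegZero v} ∧ ij.2 = {v | L.toHyp.outDegZero v} := by
    rintro ⟨i2, j2⟩ hmg
    obtain ⟨-, -, hiz, hio, hoz, hoo⟩ := hmg
    constructor
    · ext v
      constructor
      · intro hv
        exact hiz v ⟨⟨v, hv⟩, rfl⟩
      · intro hv
        by_contra hc
        obtain ⟨p, hp, -⟩ := hio v (by rintro ⟨x, rfl⟩; exact hc x.2)
        have : p ∈ (∅ : Set (L.toHyp.E × ℕ)) := hv ▸ hp
        exact this.elim
    · ext v
      constructor
      · intro hv
        exact hoz v ⟨⟨v, hv⟩, rfl⟩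
      · intro hv
        by_contra hc
        obtain ⟨p, hp, -⟩ := hoo v (by rintro ⟨x, rfl⟩; exact hc x.2)
        have : p ∈ (∅ : Set (L.toHyp.E × ℕ)) := hv ▸ hp
        exact this.elim
  have hP : (Cospan.mk L.toHyp (fun x : ↥(Iset A L) => x.1)
      (fun y : ↥(Jset A L) => y.1)).Monogamous := MIDc_mono hm hconv
  refine ⟨(Iset A L, Jset A L), ⟨hP, L.toHyp_acyclic ha, ?_⟩, ?_⟩
  · refine ⟨C1S hm, C2S hm hconv, f₁ hm, g₁ hm, f₂ hm hconv, g₂ hm hconv,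
      C1c_mono hm, (C1S hm).toHyp_acyclic ha, C2c_mono hm hconv,
      (C2S hm hconv).toHyp_acyclic ha, ?_⟩
    exact ⟨decompIso hm hconv⟩
  · rintro ⟨i2, j2⟩ ⟨hmono2, -, -⟩
    obtain ⟨h1, h2⟩ := key _ hmono2
    obtain ⟨h3, h4⟩ := key (Iset A L, Jset A L) hP
    exact Prod.ext (h1.trans h3.symm) (h2.trans h4.symm)

end SDRT
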